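/- Let h_H, h_V, h_{V'}, c_H be nonzero real numbers and let k be a nonzero rational number. Suppose c_H / h_V is irrational. If d_0, d_1, d_2 are rational numbers satisfying d_1/h_V + d_2/h_{V'} = 0 and d_0/h_H + d_2·k·c_H/(h_{V'}·h_H) = 0, then d_0 = d_1 = d_2 = 0. -/

import Mathlib

/-- Nondegeneracy step: if `c_H / h_V` is irrational and rational numbers
`d₀, d₁, d₂` satisfy `d₁/h_V + d₂/h_V' = 0` and
`d₀/h_H + d₂·k·c_H/(h_V'·h_H) = 0`, then `d₀ = d₁ = d₂ = 0`. -/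
theorem nondegenerate_constraint
    (hH hV hV' cH : ℝ) (hhH : hH ≠ 0) (hhV : hV ≠ 0) (hhV' : hV' ≠ 0)
    (hcH : cH ≠ 0) (k : ℚ) (hk : k ≠ 0)
    (hirr : Irrational (cH / hV))
    (d₀ d₁ d₂ : ℚ)
    (h1 : (d₁ : ℝ) / hV + (d₂ : ℝ) / hV' = 0)
    (h2 : (d₀ : ℝ) / hH + (d₂ : ℝ) * (k : ℝ) * cH / (hV' * hH) = 0) :
    d₀ = 0 ∧ d₁ = 0 ∧ d₂ = 0 := by
  have hd2 : d₂ = 0 := by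
    by_contra hd2
    have hd2' : (d₂ : ℝ) ≠ 0 := by exact_mod_cast hd2
    have hd1 : (d₁ : ℝ) ≠ 0 := by
      intro h
      rw [h] at h1
      simp at h1
      rcases h1 with h | h
      · exact hd2 (by exact_mod_cast h)
      · exact hhV' h
    -- from h1: hV' = -d₂ * hV / d₁
    have hV'eq : hV' = -(d₂ : ℝ) * hV / d₁ := by
      field_simp at h1 ⊢
      linarith
    have hkr : (k : ℝ) ≠ 0 := by exact_mod_cast hk
    have key : cH / hV = ((d₀ / (d₁ * k) : ℚ) : ℝ) := by
      push_cast
      rw [hV'eq] at h2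
      field_simp at h2 ⊢
      have h3 : (d₂ : ℝ) * hH * (cH * ((d₁:ℝ) * k) - (d₀:ℝ) * hV) = 0 := by
        linear_combination (-(d₂:ℝ) * hH) * h2
      have h4 := (mul_eq_zero.1 h3).resolve_left (mul_ne_zero hd2' hhH)
      linarith
    exact hirr ⟨_, key.symm⟩
  have hd1 : d₁ = 0 := by
    rw [hd2] at h1
    simp at h1
    rcases h1 with h | h
    · exact_mod_cast h
    · exact absurd h hhV
  have hd0 : d₀ = 0 := by
    rw [hd2] at h2
    simp at h2
    rcases h2 with h | h
    · exact_mod_cast h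
    · exact absurd h hhH
  exact ⟨hd0, hd1, hd2⟩
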